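/- Let X be a cluster-tilting subcategory of a triangulated category C with split idempotents, and let A₀ →f₀ A₁ →f₁ A₂ →f₂ ΣA₀ be a distinguished triangle in C. If the morphism Σ⁻¹f₂ : Σ⁻¹A₂ → A₀ factors through an object of X (i.e. its class in C/X is zero), then in the quotient category C/X the morphism f̄₀ is a kernel of f̄₁; equivalently, the sequence 0 → A₀ → A₁ → A₂ is left exact in C/X. -/

import Mathlib

open CategoryTheory CategoryTheory.Limits CategoryTheory.Pretriangulated

universe v u

variable {C : Type u} [Category.{v} C] [Preadditive C] [HasZeroObject C]
  [HasShift C ℤ] [∀ n : ℤ, (shiftFunctor C n).Additive] [Pretriangulated C]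

/-- `f` factors through an object satisfying `X`. -/
def FactorsThru (X : C → Prop) {A B : C} (f : A ⟶ B) : Prop :=
  ∃ (X₀ : C) (g : A ⟶ X₀) (h : X₀ ⟶ B), X X₀ ∧ g ≫ h = f

/-- The hom relation on `C` identifying two morphisms when their difference factors
through an object of `X`; the quotient category `C/X` is the quotient by this relation. -/
def homRelOf (X : C → Prop) : HomRel C :=
  fun {A B : C} (f g : A ⟶ B) => FactorsThru X (f - g)

/-- The additive quotient category `C/X`. -/
abbrev QuotCat (X : C → Prop) := CategoryTheory.Quotient (homRelOf X)

/-- The quotient functor `C ⥤ C/X`, sending a morphism `f` to its class `f̄`. -/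
abbrev quotFunctor (X : C → Prop) : C ⥤ QuotCat X := Quotient.functor _

/-- `X` is a full additive subcategory: it contains the zero objects and is closed under
isomorphisms, finite direct sums and direct summands. -/
structure IsAdditiveClosed (X : C → Prop) : Prop where
  zero : ∀ Z : C, IsZero Z → X Z
  iso : ∀ {A B : C}, (A ≅ B) → X A → X B
  biprod : ∀ {A B : C} (b : BinaryBicone A B), Nonempty b.IsBilimit → X A → X B → X b.pt
  summand : ∀ {A B : C} (i : A ⟶ B) (p : B ⟶ A), i ≫ p = 𝟙 A → X B → X A

/-- `X` is a cluster-tilting subcategory of the triangulated category `C`: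
it is a full additive subcategory such that (i) `Hom(X₁, ΣX₂) = 0` for all `X₁, X₂ ∈ X`, and
(ii) every object `A` fits into a distinguished triangle `X₀ ⟶ X₁ ⟶ A ⟶ ΣX₀` with
`X₀, X₁ ∈ X`. -/
structure IsClusterTilting (X : C → Prop) extends IsAdditiveClosed X : Prop where
  hom_shift_zero : ∀ {X₁ X₂ : C}, X X₁ → X X₂ → ∀ f : X₁ ⟶ X₂⟦(1 : ℤ)⟧, f = 0
  exists_triangle : ∀ A : C, ∃ (X₀ X₁ : C) (f : X₀ ⟶ X₁) (g : X₁ ⟶ A) (h : A ⟶ X₀⟦(1 : ℤ)⟧),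
    X X₀ ∧ X X₁ ∧ Triangle.mk f g h ∈ distTriang C

/-- `f : A ⟶ B` is `X`-monic: every morphism from `A` to an object of `X` factors through `f`. -/
def XMonic (X : C → Prop) {A B : C} (f : A ⟶ B) : Prop :=
  ∀ X' : C, X X' → ∀ u : A ⟶ X', ∃ v : B ⟶ X', f ≫ v = u

/-- `f : A ⟶ B` is `X`-epic: every morphism from an object of `X` to `B` factors through `f`. -/
def XEpic (X : C → Prop) {A B : C} (f : A ⟶ B) : Prop :=
  ∀ X' : C, X X' → ∀ u : X' ⟶ B, ∃ v : X' ⟶ A, v ≫ f = u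

section Aux

open ZeroObject

set_option linter.unusedSectionVars false

variable {X : C → Prop}

lemma FactorsThru.zero' (hX : IsAdditiveClosed X) (A B : C) : FactorsThru X (0 : A ⟶ B) :=
  ⟨0, 0, 0, hX.zero 0 (isZero_zero C), by simp⟩

lemma FactorsThru.neg {A B : C} {f : A ⟶ B} (h : FactorsThru X f) : FactorsThru X (-f) := by
  obtain ⟨P, u, v, hP, rfl⟩ := h
  exact ⟨P, -u, v, hP, by simp⟩

lemma FactorsThru.compLeft {A B D : C} (f : A ⟶ B) {g : B ⟶ D} (h : FactorsThru X g) :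
    FactorsThru X (f ≫ g) := by
  obtain ⟨P, u, v, hP, rfl⟩ := h
  exact ⟨P, f ≫ u, v, hP, by simp⟩

lemma FactorsThru.compRight {A B D : C} {f : A ⟶ B} (g : B ⟶ D) (h : FactorsThru X f) :
    FactorsThru X (f ≫ g) := by
  obtain ⟨P, u, v, hP, rfl⟩ := h
  exact ⟨P, u, v ≫ g, hP, by simp⟩

/-- A biproduct of two objects of a cluster-tilting subcategory, constructed from a
distinguished triangle with zero connecting morphism. -/
lemma IsClusterTilting.exists_bicone (hX : IsClusterTilting X) {P Q : C}
    (hP : X P) (hQ : X Q) :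
    ∃ (b : BinaryBicone P Q) (_ : b.IsBilimit), X b.pt := by
  obtain ⟨R, i, p, mem⟩ := distinguished_cocone_triangle₂ (0 : Q ⟶ P⟦(1 : ℤ)⟧)
  obtain ⟨r, hir⟩ : ∃ r : R ⟶ P, i ≫ r = 𝟙 P := by
    obtain ⟨r₀, hr₀⟩ := Triangle.yoneda_exact₂ _ (inv_rot_of_distTriang _ mem) (𝟙 P)
      (by
        change (-((0 : Q ⟶ P⟦(1 : ℤ)⟧)⟦(-1 : ℤ)⟧' ≫ (shiftEquiv C (1 : ℤ)).unitIso.inv.app P)) ≫ 𝟙 P = 0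
        simp)
    exact ⟨r₀, hr₀.symm⟩
  obtain ⟨s, hsp⟩ : ∃ s : Q ⟶ R, s ≫ p = 𝟙 Q := by
    obtain ⟨s₀, hs₀⟩ := Triangle.coyoneda_exact₃ _ mem (𝟙 Q) (Category.id_comp _)
    exact ⟨s₀, hs₀.symm⟩
  have hip : i ≫ p = 0 := comp_distTriang_mor_zero₁₂ _ mem
  haveI : IsSplitEpi p := ⟨⟨⟨s, hsp⟩⟩⟩
  have he : i ≫ (𝟙 R - r ≫ i) = 0 := by
    simp [Preadditive.comp_sub, reassoc_of% hir]
  obtain ⟨t, ht⟩ : ∃ t : Q ⟶ R, 𝟙 R - r ≫ i = p ≫ t :=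
    Triangle.yoneda_exact₂ _ mem (𝟙 R - r ≫ i) he
  have htp : t ≫ p = 𝟙 Q := by
    rw [← cancel_epi p]
    calc p ≫ t ≫ p = (p ≫ t) ≫ p := by rw [Category.assoc]
    _ = (𝟙 R - r ≫ i) ≫ p := by rw [← ht]
    _ = p - r ≫ (i ≫ p) := by simp [Preadditive.sub_comp]
    _ = p ≫ 𝟙 Q := by rw [hip]; simp
  have htr : t ≫ r = 0 := by
    rw [← cancel_epi p]
    calc p ≫ t ≫ r = (p ≫ t) ≫ r := by rw [Category.assoc]
    _ = (𝟙 R - r ≫ i) ≫ r := by rw [← ht]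
    _ = r - r ≫ (i ≫ r) := by simp [Preadditive.sub_comp]
    _ = p ≫ 0 := by rw [hir]; simp
  let b : BinaryBicone P Q :=
    { pt := R
      fst := r
      snd := p
      inl := i
      inr := t
      inl_fst := hir
      inl_snd := hip
      inr_fst := htr
      inr_snd := htp }
  have total : b.fst ≫ b.inl + b.snd ≫ b.inr = 𝟙 b.pt := by
    dsimp [b]
    rw [← ht]
    abel
  exact ⟨b, isBinaryBilimitOfTotal b total, hX.biprod b ⟨isBinaryBilimitOfTotal b total⟩ hP hQ⟩

lemma FactorsThru.add (hX : IsClusterTilting X) {A B : C} {f g : A ⟶ B}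
    (hf : FactorsThru X f) (hg : FactorsThru X g) : FactorsThru X (f + g) := by
  obtain ⟨P, u₁, v₁, hP, rfl⟩ := hf
  obtain ⟨Q, u₂, v₂, hQ, rfl⟩ := hg
  obtain ⟨b, hb, hpt⟩ := hX.exists_bicone hP hQ
  refine ⟨b.pt, u₁ ≫ b.inl + u₂ ≫ b.inr, b.fst ≫ v₁ + b.snd ≫ v₂, hpt, ?_⟩
  simp [Preadditive.add_comp, Preadditive.comp_add, b.inl_fst_assoc, b.inr_snd_assoc,
    reassoc_of% b.inl_snd, reassoc_of% b.inr_fst]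

lemma FactorsThru.sub (hX : IsClusterTilting X) {A B : C} {f g : A ⟶ B}
    (hf : FactorsThru X f) (hg : FactorsThru X g) : FactorsThru X (f - g) := by
  rw [sub_eq_add_neg]
  exact FactorsThru.add hX hf hg.neg

lemma congruence_homRelOf (hX : IsClusterTilting X) : Congruence (homRelOf X) where
  equivalence := by
    refine fun {A B} => ⟨fun f => ?_, fun {f g} h => ?_, fun {f g h} h₁ h₂ => ?_⟩
    · show FactorsThru X (f - f)
      rw [sub_self]
      exact FactorsThru.zero' hX.toIsAdditiveClosed _ _
    · show FactorsThru X (g - f)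
      rw [← neg_sub]
      exact FactorsThru.neg h
    · show FactorsThru X (f - h)
      rw [← sub_add_sub_cancel f g h]
      exact FactorsThru.add hX h₁ h₂
  comp_left := by
    intro _ _ _ f g g' h
    show FactorsThru X (f ≫ g - f ≫ g')
    rw [← Preadditive.comp_sub]
    exact FactorsThru.compLeft f h
  comp_right := by
    intro _ _ _ f f' g h
    show FactorsThru X (f ≫ g - f' ≫ g)
    rw [← Preadditive.sub_comp]
    exact FactorsThru.compRight g h

end Aux

/-- For a distinguished triangle `A₀ ⟶ A₁ ⟶ A₂ ⟶ ΣA₀` over a cluster-tilting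
subcategory `X`, if `Σ⁻¹f₂ : Σ⁻¹A₂ ⟶ A₀` factors through `X` then `f̄₀` is a kernel of `f̄₁`
in `C/X`. -/
theorem kernel_of_factorsThru [IsIdempotentComplete C]
    (X : C → Prop) (hX : IsClusterTilting X)
    {A₀ A₁ A₂ : C} (f₀ : A₀ ⟶ A₁) (f₁ : A₁ ⟶ A₂) (f₂ : A₂ ⟶ A₀⟦(1 : ℤ)⟧)
    (hT : Triangle.mk f₀ f₁ f₂ ∈ distTriang C)
    (hf₂ : FactorsThru X
      (f₂⟦(-1 : ℤ)⟧' ≫ (shiftFunctorCompIsoId C (1 : ℤ) (-1 : ℤ) (by omega)).hom.app A₀)) :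
    (quotFunctor X).map f₀ ≫ (quotFunctor X).map f₁ = (quotFunctor X).map (0 : A₀ ⟶ A₂) ∧
    ∀ (Z : C) (φ : (quotFunctor X).obj Z ⟶ (quotFunctor X).obj A₁),
      φ ≫ (quotFunctor X).map f₁ = (quotFunctor X).map (0 : Z ⟶ A₂) →
      ∃! ψ : (quotFunctor X).obj Z ⟶ (quotFunctor X).obj A₀,
        ψ ≫ (quotFunctor X).map f₀ = φ := by
  haveI : Congruence (homRelOf X) := congruence_homRelOf hX
  have e1 := shiftFunctorCompIsoId C (1 : ℤ) (-1 : ℤ) (by omega)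
  -- the connecting morphism and its factorization
  obtain ⟨X', p, q, hX', hpq⟩ := hf₂
  -- the inverse rotated triangle
  have hT' : (Triangle.mk f₀ f₁ f₂).invRotate ∈ distTriang C := inv_rot_of_distTriang _ hT
  have hmor₁ : (Triangle.mk f₀ f₁ f₂).invRotate.mor₁ =
      -(f₂⟦(-1 : ℤ)⟧' ≫ (shiftFunctorCompIsoId C (1 : ℤ) (-1 : ℤ) (by omega)).hom.app A₀) := by
    simp [Triangle.invRotate, shiftEquiv', Preadditive.neg_comp]
    rfl
  constructor
  · rw [← Functor.map_comp]
    congr 1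
    exact comp_distTriang_mor_zero₁₂ _ hT
  · intro Z φ hφ
    obtain ⟨c, rfl⟩ := (quotFunctor X).map_surjective φ
    rw [← Functor.map_comp] at hφ
    rw [Quotient.functor_map_eq_iff] at hφ
    have hφ' : FactorsThru X (c ≫ f₁) := by simpa [homRelOf] using hφ
    obtain ⟨X₃, a, b, hX₃, hab⟩ := hφ'
    -- b ≫ f₂ = 0
    have hbf₂ : b ≫ f₂ = 0 := by
      have hnat := (shiftFunctorCompIsoId C (-1 : ℤ) (1 : ℤ) (by omega)).hom.naturality f₂
      simp only [Functor.comp_map, Functor.id_map] at hnat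
      have hshift : f₂⟦(-1 : ℤ)⟧' = (p ≫ q) ≫
          (shiftFunctorCompIsoId C (1 : ℤ) (-1 : ℤ) (by omega)).inv.app A₀ := by
        rw [hpq]; simp
      have hf₂eq : f₂ = (shiftFunctorCompIsoId C (-1 : ℤ) (1 : ℤ) (by omega)).inv.app A₂ ≫
          (f₂⟦(-1 : ℤ)⟧')⟦(1 : ℤ)⟧' ≫
          (shiftFunctorCompIsoId C (-1 : ℤ) (1 : ℤ) (by omega)).hom.app (A₀⟦(1 : ℤ)⟧) := by
        rw [hnat]; simp
      have hzero : b ≫ (shiftFunctorCompIsoId C (-1 : ℤ) (1 : ℤ) (by omega)).inv.app A₂ ≫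
          p⟦(1 : ℤ)⟧' = 0 := hX.hom_shift_zero hX₃ hX' _
      rw [hf₂eq, hshift]
      simp only [Functor.map_comp, Category.assoc]
      rw [reassoc_of% hzero]
      simp
    obtain ⟨b', hb'⟩ : ∃ b' : X₃ ⟶ A₁, b = b' ≫ f₁ := Triangle.coyoneda_exact₃ _ hT b hbf₂
    -- b' : X₃ ⟶ A₁ with b = b' ≫ f₁
    have hcomp : (c - a ≫ b') ≫ f₁ = 0 := by
      rw [Preadditive.sub_comp, Category.assoc, ← hb', hab, sub_self]
    obtain ⟨d, hd⟩ : ∃ d : Z ⟶ A₀, c - a ≫ b' = d ≫ f₀ :=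
      Triangle.coyoneda_exact₂ _ hT (c - a ≫ b') hcomp
    -- d : Z ⟶ A₀ with c - a ≫ b' = d ≫ f₀
    have hdf₀c : FactorsThru X (d ≫ f₀ - c) := by
      have : d ≫ f₀ - c = -(a ≫ b') := by rw [← hd]; abel
      rw [this]
      exact FactorsThru.neg ⟨X₃, a, b', hX₃, rfl⟩
    refine ⟨(quotFunctor X).map d, ?_, ?_⟩
    · show (quotFunctor X).map d ≫ (quotFunctor X).map f₀ = (quotFunctor X).map c
      rw [← Functor.map_comp]
      exact CategoryTheory.Quotient.sound _ hdf₀c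
    · intro y hy
      obtain ⟨m, rfl⟩ := (quotFunctor X).map_surjective y
      replace hy : (quotFunctor X).map m ≫ (quotFunctor X).map f₀ = (quotFunctor X).map c := hy
      rw [← Functor.map_comp, Quotient.functor_map_eq_iff] at hy
      have hmc : FactorsThru X (m ≫ f₀ - c) := hy
      -- (m - d) ≫ f₀ factors through X
      have hsub : FactorsThru X ((m - d) ≫ f₀) := by
        have : (m - d) ≫ f₀ = (m ≫ f₀ - c) - (d ≫ f₀ - c) := by
          rw [Preadditive.sub_comp]; abel
        rw [this]
        exact FactorsThru.sub hX hmc hdf₀c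
      obtain ⟨X₄, a₂, b₂, hX₄, hab₂⟩ := hsub
      -- approximation triangle of A₀
      obtain ⟨X₀', X₁', u, g, ε, hX₀', hX₁', hTg⟩ := hX.exists_triangle A₀
      -- mor₁ of the inverse rotation kills ε
      have hwε : (Triangle.mk f₀ f₁ f₂).invRotate.mor₁ ≫ ε = 0 := by
        have hq : q ≫ ε = 0 := hX.hom_shift_zero hX' hX₀' _
        rw [hmor₁]
        change (-(f₂⟦(-1 : ℤ)⟧' ≫ (shiftFunctorCompIsoId C (1 : ℤ) (-1 : ℤ) (by omega)).hom.app A₀)) ≫ ε = 0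
        rw [← hpq, Preadditive.neg_comp, Category.assoc, hq]
        simp
      obtain ⟨ε', hε'⟩ : ∃ ε' : A₁ ⟶ X₀'⟦(1 : ℤ)⟧, ε = f₀ ≫ ε' :=
        Triangle.yoneda_exact₂ _ hT' ε hwε
      -- ε = f₀ ≫ ε' (mor₂ of invRotate is f₀)
      have hψε : (m - d) ≫ ε = 0 := by
        rw [hε', ← Category.assoc, ← hab₂, Category.assoc,
          hX.hom_shift_zero hX₄ hX₀' (b₂ ≫ ε')]
        simp
      obtain ⟨t, ht⟩ : ∃ t : Z ⟶ X₁', m - d = t ≫ g :=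
        Triangle.coyoneda_exact₃ _ hTg (m - d) hψε
      have : FactorsThru X (m - d) := ⟨X₁', t, g, hX₁', ht.symm⟩
      exact CategoryTheory.Quotient.sound _ this
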